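/- Let X be an S-concave (S ≥ 1), (C,D)-locally semi-convex, Busemann concave complete geodesic space whose Hausdorff dimension equals n ∈ ℕ. Fix p > S + 1 and C' ≥ 2^{2−p}, and suppose that for every x ∈ X there exists r_x > 0 such that for every constant-speed geodesic ξ : [0,1] → B(x, r_x) and every y ∈ B(x, r_x) one has dist(y, ξ(1/2))^p ≤ (1/2)·dist(y, ξ 0)^p + (1/2)·dist(y, ξ 1)^p − (C'/4)·dist(ξ 0, ξ 1)^p. Then for μH[n]-almost every x ∈ X the norm ‖·‖_x on ℝⁿ arising as the pointed Gromov–Hausdorff blow-up limit at x (i.e., such that for every ε > 0 there is r₀ > 0 with an ε-isometry from (X, d/r, x) to (ℝⁿ, ‖·‖_x, 0) for all r ∈ (0, r₀)) is strictly convex and satisfies, for all u, v ∈ ℝⁿ: ‖(u+v)/2‖_x² ≥ (1/2)‖u‖_x² + (1/2)‖v‖_x² − (S/4)‖u−v‖_x², and ‖(u+v)/2‖_x^p ≤ (1/2)‖u‖_x^p + (1/2)‖v‖_x^p − (C'/4)‖u−v‖_x^p. -/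
import Mathlib


open Set Metric MeasureTheory Filter Topology

noncomputable section

variable {X : Type*} [MetricSpace X]

/-- A constant-speed geodesic parametrized on `[0,1]`. -/
def IsConstSpeedGeodesic (γ : ℝ → X) : Prop :=
  ∀ s ∈ Set.Icc (0:ℝ) 1, ∀ t ∈ Set.Icc (0:ℝ) 1,
    dist (γ s) (γ t) = |s - t| * dist (γ 0) (γ 1)

/-- A unit-speed geodesic parametrized on `[a,b]`. -/
def IsUnitSpeedGeodesicOn (ξ : ℝ → X) (a b : ℝ) : Prop :=
  ∀ s ∈ Set.Icc a b, ∀ t ∈ Set.Icc a b, dist (ξ s) (ξ t) = |s - t|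

/-- A geodesic space: any two points are joined by a constant-speed geodesic. -/
def IsGeodesicSpace (X : Type*) [MetricSpace X] : Prop :=
  ∀ x y : X, ∃ γ : ℝ → X, IsConstSpeedGeodesic γ ∧ γ 0 = x ∧ γ 1 = y

/-- `S`-concavity of the squared distance functions. -/
def SConcave (X : Type*) [MetricSpace X] (S : ℝ) : Prop :=
  ∀ (p : X) (γ : ℝ → X), IsConstSpeedGeodesic γ → ∀ t ∈ Set.Icc (0:ℝ) 1,
    (1 - t) * dist p (γ 0) ^ 2 + t * dist p (γ 1) ^ 2
      - S * t * (1 - t) * dist (γ 0) (γ 1) ^ 2 ≤ dist p (γ t) ^ 2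

/-- `(C,D)`-local semi-convexity of the squared distance functions. -/
def LocSemiConvex (X : Type*) [MetricSpace X] (C D : ℝ) : Prop :=
  ∀ (p : X) (γ : ℝ → X), IsConstSpeedGeodesic γ →
    (∀ t ∈ Set.Icc (0:ℝ) 1, dist p (γ t) < D) →
    ∀ t ∈ Set.Icc (0:ℝ) 1,
      dist p (γ t) ^ 2 ≤ (1 - t) * dist p (γ 0) ^ 2 + t * dist p (γ 1) ^ 2
        + C * t * (1 - t) * dist (γ 0) (γ 1) ^ 2

/-- Busemann concavity: `t ↦ dist (γ t) (η t) / t` is non-increasing for geodesics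
with a common starting point. -/
def BusemannConcave (X : Type*) [MetricSpace X] : Prop :=
  ∀ γ η : ℝ → X, IsConstSpeedGeodesic γ → IsConstSpeedGeodesic η → γ 0 = η 0 →
    ∀ s t : ℝ, 0 < s → s ≤ t → t ≤ 1 →
      dist (γ t) (η t) / t ≤ dist (γ s) (η s) / s

/-- The Euclidean comparison angle `∠̃(p, x, q)` at the vertex `x`. -/
def compAngle (p x q : X) : ℝ :=
  Real.arccos ((dist x p ^ 2 + dist x q ^ 2 - dist p q ^ 2) / (2 * dist x p * dist x q))

/-- `p` is a `(1,δ)`-strainer at `x` with opposite strainer `q`. -/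
def IsOneStrainer (S δ : ℝ) (x p q : X) : Prop :=
  p ≠ x ∧ q ≠ x ∧ Real.pi - δ < compAngle p x q ∧
    Real.arccos (1 - S * dist q x / (2 * dist p x)) < δ

/-- The tuple `p` is a `(k,δ)`-strainer at `x` with opposite strainer `q`. -/
def IsStrainer (S C D δ : ℝ) (x : X) {k : ℕ} (p q : Fin k → X) : Prop :=
  (∀ j, IsOneStrainer S δ x (p j) (q j)) ∧
  (∀ j : Fin k, (j : ℕ) = 0 → dist (p j) x < D) ∧
  ∀ i j : Fin k, i < j →
    Real.arccos (1 - (S + C) * dist (p j) x / (2 * dist (p i) x)) < δ ∧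
    |compAngle (p i) x (p j) - Real.pi / 2| < δ ∧
    |compAngle (p i) x (q j) - Real.pi / 2| < δ

/-- The set `A(k,δ)` of `(k,δ)`-strained points. -/
def strainedPoints (X : Type*) [MetricSpace X] (S C D δ : ℝ) (k : ℕ) : Set X :=
  {x : X | ∃ p q : Fin k → X, IsStrainer S C D δ x p q}

/-- The constant `δ_k = k⁻¹ 2^{-2k-1}`. -/
def strainerDelta (k : ℕ) : ℝ := ((k : ℝ) * 2 ^ (2 * k + 1))⁻¹

/-- The `ℓ¹` distance on `Fin k → ℝ`. -/
def l1dist {k : ℕ} (u v : Fin k → ℝ) : ℝ := ∑ i, |u i - v i|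

/-- `F` is an `ε`-open map on `U`, where the target carries the distance `dY`. -/
def IsEpsOpenOn {Y : Type*} (F : X → Y) (dY : Y → Y → ℝ) (U : Set X) (ε : ℝ) : Prop :=
  ∀ x ∈ U, ∃ r > 0, Metric.closedBall x (ε⁻¹ * r) ⊆ U ∧
    IsComplete (Metric.closedBall x (ε⁻¹ * r)) ∧
    ∀ v : Y, dY (F x) v < r → ∃ y ∈ U, F y = v ∧ ε * dist x y ≤ dY (F x) v

/-- `N` is a norm on a real vector space. -/
def IsNormFn {E : Type*} [AddCommGroup E] [Module ℝ E] (N : E → ℝ) : Prop :=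
  (∀ u, 0 ≤ N u) ∧ (∀ u, N u = 0 ↔ u = 0) ∧
  (∀ (a : ℝ) (u : E), N (a • u) = |a| * N u) ∧ ∀ u v, N (u + v) ≤ N u + N v

/-- `F` is an `ε`-isometry between pointed metric spaces, the metrics being
given by the explicit distance functions `dX` and `dY`. -/
def IsEpsIsometry {Y : Type*} (dX : X → X → ℝ) (x : X) (dY : Y → Y → ℝ) (y : Y)
    (ε : ℝ) (F : X → Y) : Prop :=
  F x = y ∧
  (∀ z z' : X, dX x z < 1 / ε → dX x z' < 1 / ε →
    |dX z z' - dY (F z) (F z')| < ε) ∧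
  ∀ r : ℝ, r < 1 / ε → ∀ w : Y, dY y w < r - ε →
    ∃ z : X, dX x z < r ∧ dY w (F z) ≤ ε

/-- The metric space `X` is doubling with constant `N`. -/
def MetricDoubling (X : Type*) [MetricSpace X] (N : ℕ) : Prop :=
  ∀ (x : X) (r : ℝ), 0 < r → ∃ t : Finset X,
    (Metric.ball x r ⊆ ⋃ y ∈ t, Metric.ball y (r / 2)) ∧ t.card ≤ N

section Helpers

variable {E : Type*} [AddCommGroup E] [Module ℝ E]

lemma IsNormFn.neg' {N : E → ℝ} (hN : IsNormFn N) (w : E) : N (-w) = N w := by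
  have := hN.2.2.1 (-1) w
  simpa using this

lemma IsNormFn.sub_comm' {N : E → ℝ} (hN : IsNormFn N) (a b : E) :
    N (a - b) = N (b - a) := by
  have h := hN.neg' (a - b)
  rw [neg_sub] at h
  exact h.symm

lemma IsNormFn.sub_le' {N : E → ℝ} (hN : IsNormFn N) (a b : E) :
    N (a - b) ≤ N a + N b := by
  have h := hN.2.2.2 a (-b)
  rw [hN.neg' b] at h
  simpa [sub_eq_add_neg] using h

lemma IsNormFn.abs_sub_le' {N : E → ℝ} (hN : IsNormFn N) (a b : E) :
    |N a - N b| ≤ N (a - b) := by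
  rw [abs_sub_le_iff]
  constructor
  · have h := hN.2.2.2 (a - b) b
    simpa using h
  · have h := hN.2.2.2 (b - a) a
    rw [hN.sub_comm' b a] at h
    simpa using h

lemma pi_div_two_eq_smul {n : ℕ} (w : Fin n → ℝ) : w / 2 = (2⁻¹ : ℝ) • w := by
  funext i
  show w i / 2 = 2⁻¹ * w i
  ring

end Helpers

set_option maxHeartbeats 2000000 in
/-- under local `p`-uniform convexity, the Banach blow-up limits are
strictly convex, `2`-uniformly smooth and `p`-uniformly convex. -/
theorem stmt_3 {X : Type*} [MetricSpace X] [CompleteSpace X]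
    [MeasurableSpace X] [BorelSpace X]
    (S C D : ℝ) (hS : 1 ≤ S) (hC : 0 ≤ C) (hD : 0 < D)
    (hgeo : IsGeodesicSpace X) (hconc : SConcave X S)
    (hsemi : LocSemiConvex X C D) (hbus : BusemannConcave X)
    (n : ℕ) (hdim : dimH (Set.univ : Set X) = n)
    (p C' : ℝ) (hp : S + 1 < p) (hC' : (2 : ℝ) ^ (2 - p) ≤ C')
    (hconv : ∀ x : X, ∃ r > 0, ∀ ξ : ℝ → X, IsConstSpeedGeodesic ξ →
      (∀ t ∈ Set.Icc (0:ℝ) 1, ξ t ∈ Metric.ball x r) →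
      ∀ y ∈ Metric.ball x r,
        dist y (ξ (1/2)) ^ p ≤ (1/2) * dist y (ξ 0) ^ p + (1/2) * dist y (ξ 1) ^ p
          - (C'/4) * dist (ξ 0) (ξ 1) ^ p) :
    ∀ᵐ x ∂(μH[(n : ℝ)] : Measure X),
      ∀ N : (Fin n → ℝ) → ℝ, IsNormFn N →
        (∀ ε : ℝ, 0 < ε → ∃ r₀ > 0, ∀ r : ℝ, 0 < r → r < r₀ →
          ∃ F : X → Fin n → ℝ,
            IsEpsIsometry (fun a b => dist a b / r) x
              (fun u v => N (u - v)) (0 : Fin n → ℝ) ε F) →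
        (∀ u v : Fin n → ℝ, (¬ ∃ a : ℝ, 0 ≤ a ∧ u = a • v) →
            (¬ ∃ a : ℝ, 0 ≤ a ∧ v = a • u) → N (u + v) < N u + N v) ∧
        (∀ u v : Fin n → ℝ,
          (1/2) * N u ^ 2 + (1/2) * N v ^ 2 - (S/4) * N (u - v) ^ 2
            ≤ N ((u + v) / 2) ^ 2) ∧
        (∀ u v : Fin n → ℝ,
          N ((u + v) / 2) ^ p
            ≤ (1/2) * N u ^ p + (1/2) * N v ^ p - (C'/4) * N (u - v) ^ p) := by
  refine MeasureTheory.ae_of_all _ fun x => ?_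
  intro N hN hbl
  have hN0 := hN.1
  have hNeq := hN.2.1
  have hNsm := hN.2.2.1
  have hNtri := hN.2.2.2
  have hp0 : 0 < p := by linarith
  have hC'pos : 0 < C' := lt_of_lt_of_le (Real.rpow_pos_of_pos two_pos _) hC'
  have h22 : (2:ℝ) ^ (2:ℝ) = 4 := by
    rw [show (2:ℝ) = ((2:ℕ):ℝ) from by norm_num, Real.rpow_natCast]
    norm_num
  have hC4 : (2:ℝ) ^ (-p) ≤ C' / 4 := by
    have h2 : (2:ℝ) ^ (2 - p) = 4 * 2 ^ (-p) := by
      rw [show (2:ℝ) - p = 2 + (-p) by ring, Real.rpow_add (by norm_num : (0:ℝ) < 2), h22]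
    rw [h2] at hC'
    linarith
  have h2negp : (0:ℝ) < 2 ^ (-p) := Real.rpow_pos_of_pos two_pos _
  obtain ⟨rx, hrx, hcx⟩ := hconv x
  -- MAIN: the two quantitative inequalities for every pair of vectors
  have main : ∀ u v : Fin n → ℝ,
      ((1/2) * N u ^ 2 + (1/2) * N v ^ 2 - (S/4) * N (u - v) ^ 2
          ≤ N ((u + v) / 2) ^ 2) ∧
      (N ((u + v) / 2) ^ p
          ≤ (1/2) * N u ^ p + (1/2) * N v ^ p - (C'/4) * N (u - v) ^ p) := by
    intro u v
    set dd := N (u - v) with hdd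
    set w₀ := (u + v) / 2 with hw₀
    have hdd0 : 0 ≤ dd := hN0 _
    have hw₀smul : w₀ = (2⁻¹ : ℝ) • (u + v) := by rw [hw₀]; exact pi_div_two_eq_smul _
    have hNw₀ : N w₀ ≤ (N u + N v) / 2 := by
      rw [hw₀smul, hNsm, abs_of_pos (by norm_num : (0:ℝ) < 2⁻¹)]
      have := hNtri u v
      linarith
    have hw₀u : N (w₀ - u) = dd / 2 := by
      have h1 : w₀ - u = (2⁻¹ : ℝ) • (v - u) := by
        rw [hw₀]; funext i
        show (u i + v i) / 2 - u i = 2⁻¹ * (v i - u i)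
        ring
      rw [h1, hNsm, hN.sub_comm' v u, abs_of_pos (by norm_num : (0:ℝ) < 2⁻¹), ← hdd]
      ring
    have hw₀v : N (w₀ - v) = dd / 2 := by
      have h1 : w₀ - v = (2⁻¹ : ℝ) • (u - v) := by
        rw [hw₀]; funext i
        show (u i + v i) / 2 - v i = 2⁻¹ * (u i - v i)
        ring
      rw [h1, hNsm, abs_of_pos (by norm_num : (0:ℝ) < 2⁻¹), ← hdd]
      ring
    set R := N u + N v + dd + 10 with hR
    have hRpos : 0 < R := by have := hN0 u; have := hN0 v; rw [hR]; linarith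
    set ε₀ := min 1 ((4 * R)⁻¹) with hε₀def
    have hε₀pos : 0 < ε₀ := lt_min one_pos (by positivity)
    set ee : ℝ → ℝ := fun ε =>
      ((dd / 2 + 3 * ε) ^ p - 2 ^ (-p) * max (dd - 3 * ε) 0 ^ p) ^ (1 / p) + 3 * ε with hee
    have heeval : ∀ ε : ℝ, ee ε =
        ((dd / 2 + 3 * ε) ^ p - 2 ^ (-p) * max (dd - 3 * ε) 0 ^ p) ^ (1 / p) + 3 * ε := by
      intro ε; rw [hee]
    have hee0 : ee 0 = 0 := by
      rw [heeval]
      have h1 : (dd/2 + 3*0) ^ p = 2^(-p) * max (dd - 3*0) 0 ^ p := by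
        rw [mul_zero, add_zero, sub_zero, max_eq_left hdd0,
          Real.div_rpow hdd0 (by norm_num : (0:ℝ) ≤ 2),
          Real.rpow_neg (by norm_num : (0:ℝ) ≤ 2)]
        ring
      rw [h1, sub_self, Real.zero_rpow (by positivity : 1 / p ≠ 0)]
      ring
    -- the key quantitative step
    have key : ∀ ε ∈ Set.Ioo (0:ℝ) ε₀,
        (max (N w₀ - ee ε) 0 ^ p + (C' / 4) * max (dd - 3 * ε) 0 ^ p
            ≤ (1/2) * (N u + 2 * ε) ^ p + (1/2) * (N v + 2 * ε) ^ p) ∧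
        ((1/2) * max (N u - 2 * ε) 0 ^ 2 + (1/2) * max (N v - 2 * ε) 0 ^ 2
            - (S/4) * (dd + 3 * ε) ^ 2 ≤ (N w₀ + ee ε) ^ 2) := by
      rintro ε ⟨hε, hεlt⟩
      have hε1 : ε ≤ 1 := le_trans hεlt.le (min_le_left _ _)
      have hεR : ε < (4 * R)⁻¹ := lt_of_lt_of_le hεlt (min_le_right _ _)
      have h4R : (0:ℝ) < 4 * R := by linarith
      have hRε : 4 * R < 1 / ε := by
        rw [lt_div_iff₀ hε]
        have h := mul_lt_mul_of_pos_right hεR h4R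
        rw [inv_mul_cancel₀ h4R.ne'] at h
        linarith
      have hR1ε : R < 1 / ε := by linarith
      obtain ⟨r₀, hr₀pos, hr₀⟩ := hbl ε hε
      set r := min (r₀ / 2) (rx / (4 * R)) with hrdef
      have hrpos : 0 < r := lt_min (by linarith) (by positivity)
      have hrlt : r < r₀ := lt_of_le_of_lt (min_le_left _ _) (by linarith)
      obtain ⟨F, hF⟩ := hr₀ r hrpos hrlt
      obtain ⟨hFx, hFd0, hFs0⟩ := hF
      have hFd : ∀ z z' : X, dist x z / r < 1/ε → dist x z' / r < 1/ε →
          |dist z z' / r - N (F z - F z')| < ε := hFd0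
      have hFs : ∀ ρ : ℝ, ρ < 1/ε → ∀ w : Fin n → ℝ, N ((0 : Fin n → ℝ) - w) < ρ - ε →
          ∃ z : X, dist x z / r < ρ ∧ N (w - F z) ≤ ε := hFs0
      have hrx4 : r * (4 * R) ≤ rx := by
        have h := min_le_right (r₀ / 2) (rx / (4 * R))
        calc r * (4*R) ≤ rx / (4*R) * (4*R) := mul_le_mul_of_nonneg_right h h4R.le
          _ = rx := by field_simp
      -- approximate preimages of u, v, w₀
      obtain ⟨zu, hzuR, hzuF⟩ := hFs R hR1ε u (by
        rw [zero_sub, hN.neg']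
        have := hN0 v
        rw [hR]; linarith)
      obtain ⟨zv, hzvR, hzvF⟩ := hFs R hR1ε v (by
        rw [zero_sub, hN.neg']
        have := hN0 u
        rw [hR]; linarith)
      obtain ⟨zw, hzwR, hzwF⟩ := hFs R hR1ε w₀ (by
        rw [zero_sub, hN.neg']
        have h1 := hN0 u; have h2 := hN0 v
        rw [hR]; linarith [hNw₀])
      have h1ε' : (0:ℝ) < 1 / ε := by positivity
      have hxx : dist x x / r < 1 / ε := by
        rw [dist_self, zero_div]; exact h1ε'
      have hzu1 : dist x zu / r < 1 / ε := lt_trans hzuR (by linarith)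
      have hzv1 : dist x zv / r < 1 / ε := lt_trans hzvR (by linarith)
      have hzw1 : dist x zw / r < 1 / ε := lt_trans hzwR (by linarith)
      -- distance estimates
      have est : ∀ (z : X) (tg : Fin n → ℝ), dist x z / r < 1/ε → N (tg - F z) ≤ ε →
          |dist x z / r - N tg| < 2 * ε := by
        intro z tg hz htg
        have h := hFd x z hxx hz
        rw [hFx, zero_sub, hN.neg'] at h
        have h2 := hN.abs_sub_le' (F z) tg
        have h3 : N (F z - tg) ≤ ε := by rw [hN.sub_comm']; exact htg
        calc |dist x z / r - N tg|
            ≤ |dist x z / r - N (F z)| + |N (F z) - N tg| := abs_sub_le _ _ _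
          _ < ε + ε := by have := le_trans h2 h3; linarith [h]
          _ = 2 * ε := by ring
      have est2 : ∀ (z z' : X) (tg tg' : Fin n → ℝ),
          dist x z / r < 1/ε → dist x z' / r < 1/ε →
          N (tg - F z) ≤ ε → N (tg' - F z') ≤ ε →
          |dist z z' / r - N (tg - tg')| < 3 * ε := by
        intro z z' tg tg' hz hz' htg htg'
        have h := hFd z z' hz hz'
        have h1 : (F z - F z') - (tg - tg') = (F z - tg) - (F z' - tg') := by abel
        have h2 := hN.abs_sub_le' (F z - F z') (tg - tg')
        rw [h1] at h2
        have h3 := hN.sub_le' (F z - tg) (F z' - tg')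
        have h4 : N (F z - tg) ≤ ε := by rw [hN.sub_comm']; exact htg
        have h5 : N (F z' - tg') ≤ ε := by rw [hN.sub_comm']; exact htg'
        have h6 : |N (F z - F z') - N (tg - tg')| ≤ 2 * ε := le_trans h2 (by linarith [h3])
        have a1 := abs_lt.mp h
        have a2 := abs_le.mp h6
        rw [abs_lt]
        constructor <;> linarith [a1.1, a1.2, a2.1, a2.2]
      have hbu3 := est zu u hzu1 hzuF
      have hbv3 := est zv v hzv1 hzvF
      have hds3 : |dist zu zv / r - dd| < 3 * ε := by
        have h := est2 zu zv u v hzu1 hzv1 hzuF hzvF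
        rwa [← hdd] at h
      have hcu3 : |dist zw zu / r - dd / 2| < 3 * ε := by
        have h := est2 zw zu w₀ u hzw1 hzu1 hzwF hzuF
        rwa [hw₀u] at h
      have hcv3 : |dist zw zv / r - dd / 2| < 3 * ε := by
        have h := est2 zw zv w₀ v hzw1 hzv1 hzwF hzvF
        rwa [hw₀v] at h
      have hbu0 : 0 ≤ dist x zu / r := by positivity
      have hbv0 : 0 ≤ dist x zv / r := by positivity
      have hds0 : 0 ≤ dist zu zv / r := by positivity
      have hcu0 : 0 ≤ dist zw zu / r := by positivity
      have hcv0 : 0 ≤ dist zw zv / r := by positivity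
      -- geodesic from zu to zv
      obtain ⟨γ, hγ, hγ0, hγ1⟩ := hgeo zu zv
      have h0I : (0:ℝ) ∈ Set.Icc (0:ℝ) 1 := by constructor <;> norm_num
      have hhI : (1/2:ℝ) ∈ Set.Icc (0:ℝ) 1 := by constructor <;> norm_num
      have hm_zu : dist zu (γ (1/2)) = (1/2) * dist zu zv := by
        have h := hγ 0 h0I (1/2) hhI
        rw [hγ0, hγ1] at h
        rw [h]
        norm_num
      have hdzu : dist x zu < R * r := by rw [div_lt_iff₀ hrpos] at hzuR; linarith
      have hdzw : dist x zw < R * r := by rw [div_lt_iff₀ hrpos] at hzwR; linarith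
      have hdds1 := abs_lt.mp hds3
      have hddR : dd + 3 * ε ≤ 2 * R := by
        have := hN0 u; have := hN0 v
        rw [hR]; linarith
      have hduvR : dist zu zv < R * r := by
        have h : dist zu zv / r < R := by
          rw [hR]
          have := hN0 u; have := hN0 v
          linarith [hdds1.2]
        rw [div_lt_iff₀ hrpos] at h; linarith
      have hball : ∀ t ∈ Set.Icc (0:ℝ) 1, γ t ∈ Metric.ball x rx := by
        intro t ht
        have hgt := hγ t ht 0 h0I
        rw [hγ0, hγ1] at hgt
        have habs1 : |t - 0| ≤ 1 := by rw [sub_zero, abs_of_nonneg ht.1]; exact ht.2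
        have habs2 : dist (γ t) zu ≤ dist zu zv := by
          rw [hgt]
          calc |t - 0| * dist zu zv ≤ 1 * dist zu zv :=
                mul_le_mul_of_nonneg_right habs1 dist_nonneg
            _ = dist zu zv := one_mul _
        rw [Metric.mem_ball]
        have htri := dist_triangle (γ t) zu x
        have hxzu : dist zu x < R * r := by rw [dist_comm]; exact hdzu
        have hRr : 0 < R * r := by positivity
        calc dist (γ t) x ≤ dist (γ t) zu + dist zu x := htri
          _ < R * r + R * r := by linarith
          _ ≤ rx := by linarith [hrx4, hRr]
      have hzw_ball : zw ∈ Metric.ball x rx := by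
        rw [Metric.mem_ball, dist_comm]
        have hRr : 0 < R * r := by positivity
        linarith [hrx4, hdzw, hRr]
      -- transfer the convexity/concavity inequalities and rescale
      have hA := hcx γ hγ hball x (Metric.mem_ball_self hrx)
      rw [hγ0, hγ1] at hA
      have hB := hcx γ hγ hball zw hzw_ball
      rw [hγ0, hγ1] at hB
      have hQ := hconc x γ hγ (1/2) hhI
      rw [hγ0, hγ1] at hQ
      have hdr : ∀ A : ℝ, 0 ≤ A → (A / r) ^ p = A ^ p / r ^ p := fun A hA0 =>
        Real.div_rpow hA0 hrpos.le p
      have hrp : 0 < r ^ p := Real.rpow_pos_of_pos hrpos p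
      have hA' : (dist x (γ (1/2)) / r) ^ p + (C'/4) * (dist zu zv / r) ^ p
          ≤ (1/2) * (dist x zu / r) ^ p + (1/2) * (dist x zv / r) ^ p := by
        rw [hdr _ dist_nonneg, hdr _ dist_nonneg, hdr _ dist_nonneg, hdr _ dist_nonneg]
        have h : dist x (γ (1/2)) ^ p + (C'/4) * dist zu zv ^ p
            ≤ (1/2) * dist x zu ^ p + (1/2) * dist x zv ^ p := by linarith [hA]
        calc dist x (γ (1/2)) ^ p / r^p + C'/4 * (dist zu zv ^ p / r^p)
            = (dist x (γ (1/2)) ^ p + (C'/4) * dist zu zv ^ p) / r^p := by ring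
          _ ≤ ((1/2) * dist x zu ^ p + (1/2) * dist x zv ^ p) / r^p :=
              (div_le_div_iff_of_pos_right hrp).mpr h
          _ = 1/2 * (dist x zu ^ p / r^p) + 1/2 * (dist x zv ^ p / r^p) := by ring
      have hB' : (dist zw (γ (1/2)) / r) ^ p
          ≤ (1/2) * (dist zw zu / r) ^ p + (1/2) * (dist zw zv / r) ^ p
            - (C'/4) * (dist zu zv / r) ^ p := by
        rw [hdr _ dist_nonneg, hdr _ dist_nonneg, hdr _ dist_nonneg, hdr _ dist_nonneg]
        have h : dist zw (γ (1/2)) ^ p + (C'/4) * dist zu zv ^ p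
            ≤ (1/2) * dist zw zu ^ p + (1/2) * dist zw zv ^ p := by linarith [hB]
        have h2 : (dist zw (γ (1/2)) ^ p + (C'/4) * dist zu zv ^ p) / r ^ p
            ≤ ((1/2) * dist zw zu ^ p + (1/2) * dist zw zv ^ p) / r ^ p :=
          (div_le_div_iff_of_pos_right hrp).mpr h
        have e1 : (dist zw (γ (1/2)) ^ p + (C'/4) * dist zu zv ^ p) / r ^ p
            = dist zw (γ (1/2)) ^ p / r^p + C'/4 * (dist zu zv ^ p / r^p) := by ring
        have e2 : ((1/2) * dist zw zu ^ p + (1/2) * dist zw zv ^ p) / r ^ p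
            = 1/2 * (dist zw zu ^ p / r^p) + 1/2 * (dist zw zv ^ p / r^p) := by ring
        rw [e1, e2] at h2
        linarith
      have hQ' : (1/2) * (dist x zu / r)^2 + (1/2) * (dist x zv / r)^2
          - (S/4) * (dist zu zv / r)^2 ≤ (dist x (γ (1/2)) / r)^2 := by
        rw [div_pow, div_pow, div_pow, div_pow]
        have hr2 : (0:ℝ) < r^2 := by positivity
        have h : (1/2) * dist x zu ^2 + (1/2) * dist x zv ^2 - (S/4) * dist zu zv ^2
            ≤ dist x (γ (1/2)) ^ 2 := by linarith [hQ]
        have h2 : ((1/2) * dist x zu ^2 + (1/2) * dist x zv ^2 - (S/4) * dist zu zv ^2) / r^2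
            ≤ dist x (γ (1/2)) ^ 2 / r^2 := (div_le_div_iff_of_pos_right hr2).mpr h
        have e1 : ((1/2) * dist x zu ^2 + (1/2) * dist x zv ^2 - (S/4) * dist zu zv ^2) / r^2
            = 1/2 * (dist x zu ^2 / r^2) + 1/2 * (dist x zv ^2 / r^2)
              - S/4 * (dist zu zv ^2 / r^2) := by ring
        rw [e1] at h2
        linarith
      -- distances involving the midpoint
      have ham_le : dist x (γ (1/2)) / r ≤ dist x zu / r + dist zu zv / r := by
        have h1 : dist x (γ (1/2)) ≤ dist x zu + dist zu zv := by
          have htri := dist_triangle x zu (γ (1/2))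
          have h2 : dist zu (γ (1/2)) ≤ dist zu zv := by
            rw [hm_zu]; linarith [dist_nonneg (x := zu) (y := zv)]
          linarith
        rw [← add_div]
        exact (div_le_div_iff_of_pos_right hrpos).mpr h1
      have ham1 : dist x (γ (1/2)) / r < 1 / ε := by
        have h1 := hN0 u; have h2 := hN0 v
        have : dist zu zv / r < 2 * R := by linarith [hdds1.2]
        linarith [ham_le, hzuR]
      have ham0 : 0 ≤ dist x (γ (1/2)) / r := by positivity
      have hawm0 : 0 ≤ dist zw (γ (1/2)) / r := by positivity
      -- pin the midpoint: N (w₀ - F m) is small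
      have hwFm : N (w₀ - F (γ (1/2))) ≤ dist zw (γ (1/2)) / r + 2 * ε := by
        have h1 : w₀ - F (γ (1/2)) = (w₀ - F zw) + (F zw - F (γ (1/2))) := by abel
        have h2 := hNtri (w₀ - F zw) (F zw - F (γ (1/2)))
        rw [← h1] at h2
        have h3 := abs_lt.mp (hFd zw (γ (1/2)) hzw1 ham1)
        linarith [hzwF, h3.1, h3.2]
      have ham_est : |dist x (γ (1/2)) / r - N (F (γ (1/2)))| < ε := by
        have h := hFd x (γ (1/2)) hxx ham1
        rwa [hFx, zero_sub, hN.neg'] at h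
      have hamw : |dist x (γ (1/2)) / r - N w₀| ≤ dist zw (γ (1/2)) / r + 3 * ε := by
        have h1 := hN.abs_sub_le' (F (γ (1/2))) w₀
        rw [hN.sub_comm' (F (γ (1/2))) w₀] at h1
        have h3 := abs_sub_le (dist x (γ (1/2)) / r) (N (F (γ (1/2)))) (N w₀)
        have h4 := abs_lt.mp ham_est
        have h5 : |N (F (γ (1/2))) - N w₀| ≤ dist zw (γ (1/2)) / r + 2 * ε :=
          le_trans h1 hwFm
        calc |dist x (γ (1/2)) / r - N w₀|
            ≤ |dist x (γ (1/2)) / r - N (F (γ (1/2)))| + |N (F (γ (1/2))) - N w₀| := h3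
          _ ≤ dist zw (γ (1/2)) / r + 3 * ε := by linarith [h4.1, h4.2]
      -- bound on dist zw m via the p-convexity
      have hcu_hi : dist zw zu / r ≤ dd/2 + 3*ε := by linarith [(abs_lt.mp hcu3).2]
      have hcv_hi : dist zw zv / r ≤ dd/2 + 3*ε := by linarith [(abs_lt.mp hcv3).2]
      have hmaxds : max (dd - 3*ε) 0 ≤ dist zu zv / r :=
        max_le (by linarith [hdds1.1]) hds0
      have hdspow : max (dd - 3*ε) 0 ^ p ≤ (dist zu zv / r) ^ p :=
        Real.rpow_le_rpow (le_max_right _ _) hmaxds hp0.le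
      have hcupow : (dist zw zu / r) ^ p ≤ (dd/2 + 3*ε) ^ p :=
        Real.rpow_le_rpow hcu0 hcu_hi hp0.le
      have hcvpow : (dist zw zv / r) ^ p ≤ (dd/2 + 3*ε) ^ p :=
        Real.rpow_le_rpow hcv0 hcv_hi hp0.le
      have hawmQ : (dist zw (γ (1/2)) / r) ^ p
          ≤ (dd/2 + 3*ε) ^ p - 2^(-p) * max (dd - 3*ε) 0 ^ p := by
        have h1 : 2^(-p) * max (dd - 3*ε) 0 ^ p ≤ (C'/4) * (dist zu zv / r) ^ p :=
          mul_le_mul hC4 hdspow (Real.rpow_nonneg (le_max_right _ _) p) (by linarith)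
        linarith [hB', hcupow, hcvpow]
      have hawm_le : dist zw (γ (1/2)) / r
          ≤ ((dd/2 + 3*ε) ^ p - 2^(-p) * max (dd - 3*ε) 0 ^ p) ^ (1/p) := by
        have h := Real.rpow_le_rpow (Real.rpow_nonneg hawm0 p) hawmQ
          (by positivity : (0:ℝ) ≤ 1/p)
        rwa [← Real.rpow_mul hawm0, mul_one_div, div_self hp0.ne', Real.rpow_one] at h
      have hamw2 := abs_le.mp hamw
      have hee_lo : N w₀ - ee ε ≤ dist x (γ (1/2)) / r := by
        rw [heeval]; linarith [hawm_le, hamw2.2]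
      have hee_hi : dist x (γ (1/2)) / r ≤ N w₀ + ee ε := by
        rw [heeval]; linarith [hawm_le, hamw2.1]
      constructor
      · -- p-convexity transfer
        have h1 : max (N w₀ - ee ε) 0 ≤ dist x (γ (1/2)) / r := max_le hee_lo ham0
        have h1p : max (N w₀ - ee ε) 0 ^ p ≤ (dist x (γ (1/2)) / r) ^ p :=
          Real.rpow_le_rpow (le_max_right _ _) h1 hp0.le
        have h2 : (C'/4) * max (dd - 3*ε) 0 ^ p ≤ (C'/4) * (dist zu zv / r) ^ p :=
          mul_le_mul_of_nonneg_left hdspow (by linarith)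
        have hbu_hi : dist x zu / r ≤ N u + 2*ε := by linarith [(abs_lt.mp hbu3).2]
        have hbv_hi : dist x zv / r ≤ N v + 2*ε := by linarith [(abs_lt.mp hbv3).2]
        have hbupow : (dist x zu / r) ^ p ≤ (N u + 2*ε) ^ p :=
          Real.rpow_le_rpow hbu0 hbu_hi hp0.le
        have hbvpow : (dist x zv / r) ^ p ≤ (N v + 2*ε) ^ p :=
          Real.rpow_le_rpow hbv0 hbv_hi hp0.le
        linarith [hA', h1p, h2, hbupow, hbvpow]
      · -- S-concavity transfer
        have h1 : max (N u - 2*ε) 0 ≤ dist x zu / r :=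
          max_le (by linarith [(abs_lt.mp hbu3).1]) hbu0
        have h1sq : max (N u - 2*ε) 0 ^ 2 ≤ (dist x zu / r) ^ 2 :=
          pow_le_pow_left₀ (le_max_right _ _) h1 2
        have h2 : max (N v - 2*ε) 0 ≤ dist x zv / r :=
          max_le (by linarith [(abs_lt.mp hbv3).1]) hbv0
        have h2sq : max (N v - 2*ε) 0 ^ 2 ≤ (dist x zv / r) ^ 2 :=
          pow_le_pow_left₀ (le_max_right _ _) h2 2
        have h3 : dist zu zv / r ≤ dd + 3*ε := by linarith [hdds1.2]
        have h3sq : (dist zu zv / r) ^ 2 ≤ (dd + 3*ε) ^ 2 := pow_le_pow_left₀ hds0 h3 2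
        have h4sq : (dist x (γ (1/2)) / r) ^ 2 ≤ (N w₀ + ee ε) ^ 2 :=
          pow_le_pow_left₀ ham0 hee_hi 2
        have hS4 : (0:ℝ) ≤ S/4 := by linarith
        have h3sq' : (S/4) * (dist zu zv / r) ^ 2 ≤ (S/4) * (dd + 3*ε) ^ 2 :=
          mul_le_mul_of_nonneg_left h3sq hS4
        linarith [hQ', h1sq, h2sq, h4sq, h3sq']
    -- now pass to the limit ε → 0⁺
    have hcont_ee : ContinuousAt ee 0 := by
      rw [hee]
      apply ContinuousAt.add _ (by fun_prop)
      apply ContinuousAt.rpow_const _ (Or.inr (by positivity))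
      apply ContinuousAt.sub
      · exact ContinuousAt.rpow_const (by fun_prop) (Or.inr hp0.le)
      · exact continuousAt_const.mul (ContinuousAt.rpow_const
          ((by fun_prop : ContinuousAt (fun ε : ℝ => dd - 3*ε) 0).max continuousAt_const)
          (Or.inr hp0.le))
    have hmem : Set.Ioo (0:ℝ) ε₀ ∈ 𝓝[>] (0:ℝ) := Ioo_mem_nhdsGT hε₀pos
    have hT : ∀ f : ℝ → ℝ, ContinuousAt f 0 →
        Filter.Tendsto f (𝓝[>] (0:ℝ)) (𝓝 (f 0)) := fun f hf =>
      hf.tendsto.mono_left nhdsWithin_le_nhds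
    have hcont1 : ContinuousAt
        (fun ε => max (N w₀ - ee ε) 0 ^ p + (C'/4) * max (dd - 3*ε) 0 ^ p) 0 := by
      apply ContinuousAt.add
      · exact ContinuousAt.rpow_const ((continuousAt_const.sub hcont_ee).max
          continuousAt_const) (Or.inr hp0.le)
      · exact continuousAt_const.mul (ContinuousAt.rpow_const
          ((by fun_prop : ContinuousAt (fun ε : ℝ => dd - 3*ε) 0).max continuousAt_const)
          (Or.inr hp0.le))
    have hcont2 : ContinuousAt
        (fun ε : ℝ => (1/2) * (N u + 2*ε) ^ p + (1/2) * (N v + 2*ε) ^ p) 0 := by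
      apply ContinuousAt.add <;>
        exact continuousAt_const.mul
          (ContinuousAt.rpow_const (by fun_prop) (Or.inr hp0.le))
    have hcont3 : ContinuousAt
        (fun ε : ℝ => (1/2) * max (N u - 2*ε) 0 ^ 2 + (1/2) * max (N v - 2*ε) 0 ^ 2
          - (S/4) * (dd + 3*ε) ^ 2) 0 := by fun_prop
    have hcont4 : ContinuousAt (fun ε : ℝ => (N w₀ + ee ε) ^ 2) 0 :=
      (continuousAt_const.add hcont_ee).pow 2
    have T1 := hT _ hcont1
    have T2 := hT _ hcont2
    have T3 := hT _ hcont3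
    have T4 := hT _ hcont4
    have hv1 : max (N w₀ - ee 0) 0 ^ p + (C'/4) * max (dd - 3*0) 0 ^ p
        = N w₀ ^ p + (C'/4) * dd ^ p := by
      rw [hee0, sub_zero, mul_zero, sub_zero, max_eq_left (hN0 w₀), max_eq_left hdd0]
    have hv2 : (1/2) * (N u + 2*0) ^ p + (1/2) * (N v + 2*0) ^ p
        = (1/2) * N u ^ p + (1/2) * N v ^ p := by norm_num
    have hv3 : (1/2) * max (N u - 2*0) 0 ^ 2 + (1/2) * max (N v - 2*0) 0 ^ 2
        - (S/4) * (dd + 3*0) ^ 2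
        = (1/2) * N u ^ 2 + (1/2) * N v ^ 2 - (S/4) * dd ^ 2 := by
      norm_num [max_eq_left (hN0 u), max_eq_left (hN0 v)]
    have hv4 : (N w₀ + ee 0) ^ 2 = N w₀ ^ 2 := by rw [hee0, add_zero]
    rw [hv1] at T1
    rw [hv2] at T2
    rw [hv3] at T3
    rw [hv4] at T4
    have final1 : N w₀ ^ p + (C'/4) * dd ^ p ≤ (1/2) * N u ^ p + (1/2) * N v ^ p :=
      le_of_tendsto_of_tendsto T1 T2
        (Filter.eventually_of_mem hmem fun ε hε => (key ε hε).1)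
    have final2 : (1/2) * N u ^ 2 + (1/2) * N v ^ 2 - (S/4) * dd ^ 2 ≤ N w₀ ^ 2 :=
      le_of_tendsto_of_tendsto T3 T4
        (Filter.eventually_of_mem hmem fun ε hε => (key ε hε).2)
    exact ⟨final2, by linarith [final1]⟩
  -- assemble, deriving strict convexity from the p-convexity of N
  refine ⟨?_, fun u v => (main u v).1, fun u v => (main u v).2⟩
  intro u v h1 h2
  by_contra hcon
  push_neg at hcon
  have heq : N (u + v) = N u + N v := le_antisymm (hNtri u v) hcon
  have hu0 : u ≠ 0 := by rintro rfl; exact h1 ⟨0, le_refl 0, by rw [zero_smul]⟩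
  have hv0 : v ≠ 0 := by rintro rfl; exact h2 ⟨0, le_refl 0, by rw [zero_smul]⟩
  have aux : ∀ a b : Fin n → ℝ, a ≠ 0 → b ≠ 0 → N b ≤ N a → N (a + b) = N a + N b →
      ∃ c : ℝ, 0 ≤ c ∧ a = c • b := by
    intro a b ha0 hb0 hba habe
    have hNa : 0 < N a := lt_of_le_of_ne (hN0 a) fun h => ha0 ((hNeq a).mp h.symm)
    have hNb : 0 < N b := lt_of_le_of_ne (hN0 b) fun h => hb0 ((hNeq b).mp h.symm)
    set s := (N a)⁻¹ with hs
    set t := (N b)⁻¹ with ht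
    have hspos : 0 < s := inv_pos.mpr hNa
    have htpos : 0 < t := inv_pos.mpr hNb
    have hst : s ≤ t := inv_anti₀ hNb hba
    have hNsa : N (s • a) = 1 := by
      rw [hNsm, abs_of_pos hspos, hs, inv_mul_cancel₀ hNa.ne']
    have hNtb : N (t • b) = 1 := by
      rw [hNsm, abs_of_pos htpos, ht, inv_mul_cancel₀ hNb.ne']
    have hupper : N (s • a + t • b) ≤ 2 := by
      have h := hNtri (s • a) (t • b)
      rw [hNsa, hNtb] at h
      linarith
    have hlower : 2 ≤ N (s • a + t • b) := by
      have hdec : t • (a + b) = (s • a + t • b) + (t - s) • a := by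
        rw [smul_add, sub_smul]; abel
      have htr := hNtri (s • a + t • b) ((t - s) • a)
      rw [← hdec] at htr
      have e1 : N (t • (a + b)) = t * (N a + N b) := by
        rw [hNsm, abs_of_pos htpos, habe]
      have e2 : N ((t - s) • a) = (t - s) * N a := by
        rw [hNsm, abs_of_nonneg (by linarith : (0:ℝ) ≤ t - s)]
      rw [e1, e2] at htr
      have hsa : s * N a = 1 := by rw [hs]; exact inv_mul_cancel₀ hNa.ne'
      have htb : t * N b = 1 := by rw [ht]; exact inv_mul_cancel₀ hNb.ne'
      linarith [htr, hsa, htb]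
    have hsum : N (s • a + t • b) = 2 := le_antisymm hupper hlower
    have hkey := (main (s • a) (t • b)).2
    rw [pi_div_two_eq_smul, hNsm, hsum, hNsa, hNtb, Real.one_rpow,
      abs_of_pos (by norm_num : (0:ℝ) < 2⁻¹),
      show (2⁻¹ * 2 : ℝ) = 1 by norm_num, Real.one_rpow] at hkey
    have hX : (C'/4) * N (s • a - t • b) ^ p ≤ 0 := by linarith
    have hX0 : N (s • a - t • b) = 0 := by
      by_contra hne
      have hpos : 0 < N (s • a - t • b) := lt_of_le_of_ne (hN0 _) (Ne.symm hne)
      have h5 := Real.rpow_pos_of_pos hpos p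
      have hCp : (0:ℝ) < C'/4 := by linarith
      have := mul_pos hCp h5
      linarith
    have hab : s • a = t • b := sub_eq_zero.mp ((hNeq (s • a - t • b)).mp hX0)
    refine ⟨s⁻¹ * t, by positivity, ?_⟩
    have h := congrArg (fun w => s⁻¹ • w) hab
    simp only [smul_smul, inv_mul_cancel₀ hspos.ne', one_smul] at h
    exact h
  rcases le_total (N v) (N u) with hle | hle
  · exact h1 (aux u v hu0 hv0 hle heq)
  · refine h2 (aux v u hv0 hu0 hle ?_)
    rw [add_comm v u, heq, add_comm]
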